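/- Let α∈ℝ^k, d>0, and let Y be an ℝ^k-valued random variable with ‖Y−α‖≤d almost surely. Set M = E[Y]−α. Let f:ℝ^k→ℝ be measurable and let ε>0, and suppose there exists an affine function l:ℝ^k→ℝ such that |f(x)−l(x)|<ε for all x with ‖x−α‖≤d. If f(α+M)−f(α)<−5ε, then E[f(Y)]−f(α)<−ε. -/

import Mathlib

open MeasureTheory

/-- principle of local linearity: if `‖Y − α‖ ≤ d` a.s., `f` is
within `ε` of an affine function on the ball of radius `d` around `α`, and
`f(α + M) − f(α) < −5ε` where `M = E[Y] − α`, then `E[f(Y)] − f(α) < −ε`. -/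
theorem stmt10 {k : ℕ} {Ω : Type*} [MeasurableSpace Ω]
    (μ : Measure Ω) [IsProbabilityMeasure μ]
    (Y : Ω → EuclideanSpace ℝ (Fin k)) (hY : Measurable Y)
    (α : EuclideanSpace ℝ (Fin k)) (d : ℝ) (hd : 0 < d)
    (hbound : ∀ᵐ ω ∂μ, ‖Y ω - α‖ ≤ d)
    (f : EuclideanSpace ℝ (Fin k) → ℝ) (hf : Measurable f)
    (ε : ℝ) (hε : 0 < ε) (l : EuclideanSpace ℝ (Fin k) →ᵃ[ℝ] ℝ)
    (hl : ∀ x : EuclideanSpace ℝ (Fin k), ‖x - α‖ ≤ d → |f x - l x| < ε)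
    (hdrift : f (α + ((∫ ω, Y ω ∂μ) - α)) - f α < -(5 * ε)) :
    (∫ ω, f (Y ω) ∂μ) - f α < -ε := by
  set L : EuclideanSpace ℝ (Fin k) →L[ℝ] ℝ := LinearMap.toContinuousLinearMap l.linear
  have hlx : ∀ x, l x = L (x - α) + l α := by
    intro x
    have h := l.linearMap_vsub x α
    simp only [vsub_eq_sub] at h
    have : (L : EuclideanSpace ℝ (Fin k) → ℝ) (x - α) = l.linear (x - α) := rfl
    rw [this, h]; ring
  -- integrability of Y
  have hYint : Integrable Y μ := by
    refine (integrable_const (‖α‖ + d)).mono' hY.aestronglyMeasurable ?_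
    filter_upwards [hbound] with ω h
    calc ‖Y ω‖ = ‖α + (Y ω - α)‖ := by rw [add_sub_cancel]
    _ ≤ ‖α‖ + ‖Y ω - α‖ := norm_add_le _ _
    _ ≤ ‖α‖ + d := by linarith
  -- integrability of l ∘ Y
  have hfun : (fun ω => l (Y ω)) = fun ω => L (Y ω - α) + l α :=
    funext fun ω => hlx (Y ω)
  have hlYint : Integrable (fun ω => l (Y ω)) μ := by
    rw [hfun]
    exact ((L.integrable_comp (hYint.sub (integrable_const α))).add (integrable_const _))
  -- integrability of f ∘ Y
  have hfYint : Integrable (fun ω => f (Y ω)) μ := by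
    refine (hlYint.abs.add (integrable_const ε)).mono'
      ((hf.comp hY).aestronglyMeasurable) ?_
    filter_upwards [hbound] with ω h
    have h2 := hl (Y ω) h
    rw [Real.norm_eq_abs]
    have h3 := abs_sub_abs_le_abs_sub (f (Y ω)) (l (Y ω))
    show |f (Y ω)| ≤ |l (Y ω)| + ε
    linarith
  -- integral of Y - α
  have hmean_eq : (∫ ω, Y ω ∂μ) - α = ∫ ω, (Y ω - α) ∂μ := by
    rw [integral_sub hYint (integrable_const α), integral_const]
    simp
  have hmean : ‖(∫ ω, Y ω ∂μ) - α‖ ≤ d := by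
    rw [hmean_eq]
    calc ‖∫ ω, (Y ω - α) ∂μ‖ ≤ d * (μ Set.univ).toReal :=
      norm_integral_le_of_norm_le_const hbound
    _ = d := by simp
  -- E[l(Y)] = l(E[Y])
  have hElY : (∫ ω, l (Y ω) ∂μ) = l (∫ ω, Y ω ∂μ) := by
    have hYa : Integrable (fun ω => Y ω - α) μ := hYint.sub (integrable_const α)
    rw [hfun, integral_add (L.integrable_comp hYa) (integrable_const _),
      L.integral_comp_comm hYa, ← hmean_eq, hlx (∫ ω, Y ω ∂μ), integral_const]
    simp
  -- E[f(Y)] ≤ E[l(Y)] + ε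
  have h1 : (∫ ω, f (Y ω) ∂μ) ≤ (∫ ω, l (Y ω) ∂μ) + ε := by
    have : (∫ ω, f (Y ω) ∂μ) ≤ ∫ ω, (l (Y ω) + ε) ∂μ := by
      refine integral_mono_ae hfYint (hlYint.add (integrable_const ε)) ?_
      filter_upwards [hbound] with ω h
      have := hl (Y ω) h
      have := abs_lt.mp this
      linarith [this.2]
    rwa [integral_add hlYint (integrable_const ε), integral_const,
      probReal_univ, smul_eq_mul, one_mul] at this
  -- l(E[Y]) < f(E[Y]) + ε
  have h2 : l (∫ ω, Y ω ∂μ) < f (∫ ω, Y ω ∂μ) + ε := by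
    have := abs_lt.mp (hl _ hmean)
    linarith [this.1]
  rw [add_sub_cancel] at hdrift
  rw [hElY] at h1
  linarith
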